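/- Let n ≥ 2, let ε₁,…,ε_n ∈ ℝ, and let U ⊆ ℝⁿ be an open set all of whose points have pairwise distinct coordinates. Define on U the Lamé coefficients H_i = Π_{l≠i} |u^i − u^l|^{−ε_l} and the rotation coefficients β_ij = (H_i/H_j) · ε_j/(u^i − u^j) for i ≠ j, and set d_i := −Σ_{l≠i} ε_l. Then: (ED1) ∂_k β_ij = β_ik β_kj for pairwise distinct i,j,k; (ED2) e(β_ij) = 0; (ED3) E(β_ij) = (d_i − d_j − 1)β_ij; (L1) ∂_j H_i = β_ij H_j for i ≠ j; (L2) e(H_i) = 0; and (L3) E(H_i) = d_i H_i, all hold on U. -/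

import Mathlib

/-- Partial derivative `∂_i f` of a function `f : ℝⁿ → ℝ` at `x`. -/
noncomputable def pd {n : ℕ} (i : Fin n) (f : (Fin n → ℝ) → ℝ) (x : Fin n → ℝ) : ℝ :=
  fderiv ℝ f x (Pi.single i 1)

/-- Lamé coefficients of the generalized ε-system:
`H_i = ∏_{l ≠ i} |u^i - u^l| ^ (-ε_l)`. -/
noncomputable def Heps {n : ℕ} (ε : Fin n → ℝ) (i : Fin n) (x : Fin n → ℝ) : ℝ :=
  ∏ l ∈ Finset.univ.erase i, |x i - x l| ^ (-ε l)

/-- Rotation coefficients of the generalized ε-system: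
`β_ij = (H_i/H_j) · ε_j/(u^i - u^j)`. -/
noncomputable def betaEps {n : ℕ} (ε : Fin n → ℝ) (i j : Fin n) (x : Fin n → ℝ) : ℝ :=
  (Heps ε i x / Heps ε j x) * (ε j / (x i - x j))


lemma myHasDerivAt_abs_rpow (a : ℝ) {t : ℝ} (ht : t ≠ 0) :
    HasDerivAt (fun s : ℝ => |s| ^ a) (a * |t| ^ a / t) t := by
  rcases ht.lt_or_gt with h | h
  · have hnt : (0:ℝ) < -t := by linarith
    have h1 : HasDerivAt (fun s : ℝ => -s) (-1) t := (hasDerivAt_id t).neg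
    have hd : HasDerivAt (fun s : ℝ => (-s) ^ a) (a * (-t) ^ (a - 1) * (-1)) t :=
      (Real.hasDerivAt_rpow_const (x := -t) (p := a) (Or.inl hnt.ne')).comp t h1
    have heq : (fun s : ℝ => |s| ^ a) =ᶠ[nhds t] fun s => (-s) ^ a := by
      filter_upwards [Iio_mem_nhds h] with s hs
      rw [abs_of_neg hs]
    have := hd.congr_of_eventuallyEq heq
    refine this.congr_deriv ?_
    rw [abs_of_neg h, Real.rpow_sub_one hnt.ne']
    field_simp
  · have h1 : HasDerivAt (fun s : ℝ => s) (1:ℝ) t := hasDerivAt_id t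
    have hd : HasDerivAt (fun s : ℝ => s ^ a) (a * t ^ (a - 1)) t :=
      Real.hasDerivAt_rpow_const (Or.inl h.ne')
    have heq : (fun s : ℝ => |s| ^ a) =ᶠ[nhds t] fun s => s ^ a := by
      filter_upwards [Ioi_mem_nhds h] with s hs
      rw [abs_of_pos hs]
    have := hd.congr_of_eventuallyEq heq
    refine this.congr_deriv ?_
    rw [abs_of_pos h, Real.rpow_sub_one h.ne']
    field_simp

/-- coefficient `a_k = (∂_k H_i)/H_i`. -/
noncomputable def aC {n : ℕ} (ε : Fin n → ℝ) (i : Fin n) (x : Fin n → ℝ) (k : Fin n) : ℝ :=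
  if k = i then -∑ l ∈ Finset.univ.erase i, ε l / (x i - x l) else ε k / (x i - x k)

lemma HepsPos {n : ℕ} (ε : Fin n → ℝ) (i : Fin n) (x : Fin n → ℝ)
    (hx : ∀ l, l ≠ i → x i ≠ x l) : 0 < Heps ε i x := by
  apply Finset.prod_pos
  intro l hl
  exact Real.rpow_pos_of_pos (abs_pos.2 (sub_ne_zero.2 (hx l (Finset.mem_erase.1 hl).1))) _

lemma hasFDerivAt_HepsX {n : ℕ} (ε : Fin n → ℝ) (i : Fin n) (x : Fin n → ℝ)
    (hx : ∀ l, l ≠ i → x i ≠ x l) :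
    ∃ D : (Fin n → ℝ) →L[ℝ] ℝ, HasFDerivAt (Heps ε i) D x ∧
      ∀ k, D (Pi.single k 1) = Heps ε i x * aC ε i x k := by
  classical
  set u := Finset.univ.erase i with hu
  set g : Fin n → (Fin n → ℝ) → ℝ := fun l y => |y i - y l| ^ (-ε l) with hg
  set g' : Fin n → (Fin n → ℝ) →L[ℝ] ℝ := fun l =>
    (-ε l * |x i - x l| ^ (-ε l) / (x i - x l)) •
      ((ContinuousLinearMap.proj i : (Fin n → ℝ) →L[ℝ] ℝ) - ContinuousLinearMap.proj l) with hg'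
  have hderiv : ∀ l ∈ u, HasFDerivAt (g l) (g' l) x := by
    intro l hl
    have hne : x i - x l ≠ 0 := sub_ne_zero.2 (hx l (Finset.mem_erase.1 hl).1)
    have hlin : HasFDerivAt (fun y : Fin n → ℝ => y i - y l)
        ((ContinuousLinearMap.proj i : (Fin n → ℝ) →L[ℝ] ℝ) - ContinuousLinearMap.proj l) x :=
      ((ContinuousLinearMap.proj i : (Fin n → ℝ) →L[ℝ] ℝ)).hasFDerivAt.sub
        ((ContinuousLinearMap.proj l : (Fin n → ℝ) →L[ℝ] ℝ)).hasFDerivAt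
    exact (myHasDerivAt_abs_rpow (-ε l) hne).comp_hasFDerivAt x hlin
  have hprod := HasFDerivAt.finset_prod (u := u) hderiv
  refine ⟨_, hprod, ?_⟩
  intro k
  have happ : ∀ l ∈ u,
      ((∏ j ∈ u.erase l, g j x) • g' l) (Pi.single k 1)
        = (∏ j ∈ u.erase l, g j x) * (-ε l * |x i - x l| ^ (-ε l) / (x i - x l))
            * ((Pi.single k 1 : Fin n → ℝ) i - (Pi.single k 1 : Fin n → ℝ) l) := by
    intro l hl
    simp [hg', smul_smul, mul_assoc]
  rw [ContinuousLinearMap.sum_apply, Finset.sum_congr rfl happ]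
  have hH : Heps ε i x = ∏ j ∈ u, g j x := rfl
  by_cases hk : k = i
  · have : ∀ l ∈ u,
        (∏ j ∈ u.erase l, g j x) * (-ε l * |x i - x l| ^ (-ε l) / (x i - x l))
            * ((Pi.single k 1 : Fin n → ℝ) i - (Pi.single k 1 : Fin n → ℝ) l)
          = Heps ε i x * (-(ε l / (x i - x l))) := by
      intro l hl
      have hli : l ≠ i := (Finset.mem_erase.1 hl).1
      have h1 : (Pi.single k 1 : Fin n → ℝ) i = 1 := by
        simp [Pi.single_apply, hk]
      have h2 : (Pi.single k 1 : Fin n → ℝ) l = 0 := by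
        simp [Pi.single_apply, hk, hli]
      rw [h1, h2]
      have hprod' : (∏ j ∈ u.erase l, g j x) * g l x = ∏ j ∈ u, g j x :=
        Finset.prod_erase_mul u _ hl
      have hne : x i - x l ≠ 0 := sub_ne_zero.2 (hx l hli)
      have hgpos : (0:ℝ) < g l x := Real.rpow_pos_of_pos (abs_pos.2 hne) _
      have hexp : Heps ε i x = (∏ j ∈ u.erase l, g j x) * |x i - x l| ^ (-ε l) := by
        rw [hH, ← hprod']
      rw [hexp]
      field_simp
      ring
    rw [Finset.sum_congr rfl this, ← Finset.mul_sum]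
    rw [aC, if_pos hk]
    rw [← Finset.sum_neg_distrib]
  · have hk' : k ∈ u := Finset.mem_erase.2 ⟨hk, Finset.mem_univ k⟩
    rw [Finset.sum_eq_single k]
    · have h1 : (Pi.single k 1 : Fin n → ℝ) i = 0 := by
        simp [Pi.single_apply]
        intro h; exact absurd h.symm hk
      have h2 : (Pi.single k 1 : Fin n → ℝ) k = 1 := by simp
      rw [h1, h2]
      have hprod' : (∏ j ∈ u.erase k, g j x) * g k x = ∏ j ∈ u, g j x :=
        Finset.prod_erase_mul u _ hk'
      have hexp : Heps ε i x = (∏ j ∈ u.erase k, g j x) * |x i - x k| ^ (-ε k) := by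
        rw [hH, ← hprod']
      rw [hexp, aC, if_neg hk]
      have hne : x i - x k ≠ 0 := sub_ne_zero.2 (hx k hk)
      field_simp
      ring
    · intro l hl hlk
      have hli : l ≠ i := (Finset.mem_erase.1 hl).1
      have h1 : (Pi.single k 1 : Fin n → ℝ) i = 0 := by
        simp [Pi.single_apply]
        intro h; exact absurd h.symm hk
      have h2 : (Pi.single k 1 : Fin n → ℝ) l = 0 := by
        simp [Pi.single_apply]
        intro h; exact hlk h
      rw [h1, h2]; ring
    · intro h; exact absurd hk' h

lemma pd_HepsX {n : ℕ} (ε : Fin n → ℝ) (i : Fin n) (x : Fin n → ℝ)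
    (hx : ∀ l, l ≠ i → x i ≠ x l) (k : Fin n) :
    pd k (Heps ε i) x = Heps ε i x * aC ε i x k := by
  obtain ⟨D, hD, happ⟩ := hasFDerivAt_HepsX ε i x hx
  rw [pd, hD.fderiv]; exact happ k

lemma sum_aC {n : ℕ} (ε : Fin n → ℝ) (i : Fin n) (x : Fin n → ℝ) :
    ∑ k, aC ε i x k = 0 := by
  rw [← Finset.add_sum_erase _ _ (Finset.mem_univ i)]
  have h : ∀ k ∈ Finset.univ.erase i, aC ε i x k = ε k / (x i - x k) := by
    intro k hk; rw [aC, if_neg (Finset.mem_erase.1 hk).1]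
  rw [Finset.sum_congr rfl h, aC, if_pos rfl]
  ring

lemma sum_x_aC {n : ℕ} (ε : Fin n → ℝ) (i : Fin n) (x : Fin n → ℝ)
    (hx : ∀ l, l ≠ i → x i ≠ x l) :
    ∑ k, x k * aC ε i x k = -∑ l ∈ Finset.univ.erase i, ε l := by
  rw [← Finset.add_sum_erase _ _ (Finset.mem_univ i)]
  have h : ∀ k ∈ Finset.univ.erase i, x k * aC ε i x k = x k * (ε k / (x i - x k)) := by
    intro k hk; rw [aC, if_neg (Finset.mem_erase.1 hk).1]
  rw [Finset.sum_congr rfl h, aC, if_pos rfl, mul_neg, Finset.mul_sum,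
    neg_add_eq_sub, ← Finset.sum_sub_distrib, ← Finset.sum_neg_distrib]
  refine Finset.sum_congr rfl fun k hk => ?_
  have hne : x i - x k ≠ 0 := sub_ne_zero.2 (hx k (Finset.mem_erase.1 hk).1)
  field_simp
  ring

lemma pd_betaEpsX {n : ℕ} (ε : Fin n → ℝ) (i j : Fin n) (hij : i ≠ j) (x : Fin n → ℝ)
    (hx : ∀ a b : Fin n, a ≠ b → x a ≠ x b) (k : Fin n) :
    pd k (betaEps ε i j) x = betaEps ε i j x *
      (aC ε i x k - aC ε j x k
        - ((if i = k then (1:ℝ) else 0) - (if j = k then 1 else 0)) / (x i - x j)) := by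
  have hxi : ∀ l, l ≠ i → x i ≠ x l := fun l hl => hx i l (Ne.symm hl)
  have hxj : ∀ l, l ≠ j → x j ≠ x l := fun l hl => hx j l (Ne.symm hl)
  obtain ⟨Di, hDi, hDiapp⟩ := hasFDerivAt_HepsX ε i x hxi
  obtain ⟨Dj, hDj, hDjapp⟩ := hasFDerivAt_HepsX ε j x hxj
  have hne : x i - x j ≠ 0 := sub_ne_zero.2 (hx i j hij)
  have hHi : Heps ε i x ≠ 0 := (HepsPos ε i x hxi).ne'
  have hHj : Heps ε j x ≠ 0 := (HepsPos ε j x hxj).ne'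
  have hL : HasFDerivAt (fun y : Fin n → ℝ => y i - y j)
      ((ContinuousLinearMap.proj i : (Fin n → ℝ) →L[ℝ] ℝ) - ContinuousLinearMap.proj j) x :=
    ((ContinuousLinearMap.proj i : (Fin n → ℝ) →L[ℝ] ℝ)).hasFDerivAt.sub
      ((ContinuousLinearMap.proj j : (Fin n → ℝ) →L[ℝ] ℝ)).hasFDerivAt
  have hinvHj : HasFDerivAt (fun y => (Heps ε j y)⁻¹) ((-(Heps ε j x ^ 2)⁻¹) • Dj) x :=
    (hasDerivAt_inv hHj).comp_hasFDerivAt x hDj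
  have hinvd : HasFDerivAt (fun y : Fin n → ℝ => (y i - y j)⁻¹)
      ((-((x i - x j) ^ 2)⁻¹) • ((ContinuousLinearMap.proj i : (Fin n → ℝ) →L[ℝ] ℝ)
        - ContinuousLinearMap.proj j)) x :=
    (hasDerivAt_inv hne).comp_hasFDerivAt x hL
  have hfull := (hDi.mul hinvHj).mul (hinvd.const_mul (ε j))
  have hbeq : betaEps ε i j = fun y => (Heps ε i y * (Heps ε j y)⁻¹) * (ε j * (y i - y j)⁻¹) := by
    funext y; simp [betaEps, div_eq_mul_inv]
  rw [pd, hbeq, HasFDerivAt.fderiv (f := fun y => (Heps ε i y * (Heps ε j y)⁻¹) * (ε j * (y i - y j)⁻¹)) hfull]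
  have e1 : (((ContinuousLinearMap.proj i : (Fin n → ℝ) →L[ℝ] ℝ)
      - (ContinuousLinearMap.proj j : (Fin n → ℝ) →L[ℝ] ℝ))) (Pi.single k 1)
      = (if i = k then (1:ℝ) else 0) - (if j = k then 1 else 0) := by
    rw [ContinuousLinearMap.sub_apply, ContinuousLinearMap.proj_apply,
      ContinuousLinearMap.proj_apply, Pi.single_apply, Pi.single_apply]
  simp only [ContinuousLinearMap.add_apply, ContinuousLinearMap.smul_apply, smul_eq_mul,
    hDiapp, hDjapp, e1, Pi.mul_apply]
  field_simp
  ring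

theorem generalized_epsilon_system_solves_DE {n : ℕ} (hn : 2 ≤ n) (ε : Fin n → ℝ)
    (U : Set (Fin n → ℝ)) (hU : IsOpen U)
    (hdist : ∀ x ∈ U, ∀ i j : Fin n, i ≠ j → x i ≠ x j) :
    -- (ED1)
    (∀ i j k : Fin n, i ≠ j → j ≠ k → i ≠ k → ∀ x ∈ U,
      pd k (betaEps ε i j) x = betaEps ε i k x * betaEps ε k j x) ∧
    -- (ED2)
    (∀ i j : Fin n, i ≠ j → ∀ x ∈ U, ∑ l, pd l (betaEps ε i j) x = 0) ∧
    -- (ED3) with d_i = -∑_{l ≠ i} ε_l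
    (∀ i j : Fin n, i ≠ j → ∀ x ∈ U,
      ∑ l, x l * pd l (betaEps ε i j) x
        = ((-∑ l ∈ Finset.univ.erase i, ε l) - (-∑ l ∈ Finset.univ.erase j, ε l) - 1)
            * betaEps ε i j x) ∧
    -- (L1)
    (∀ i j : Fin n, i ≠ j → ∀ x ∈ U,
      pd j (Heps ε i) x = betaEps ε i j x * Heps ε j x) ∧
    -- (L2)
    (∀ i : Fin n, ∀ x ∈ U, ∑ l, pd l (Heps ε i) x = 0) ∧
    -- (L3)
    (∀ i : Fin n, ∀ x ∈ U,
      ∑ l, x l * pd l (Heps ε i) x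
        = (-∑ l ∈ Finset.univ.erase i, ε l) * Heps ε i x) := by
  have key : ∀ x ∈ U, ∀ i : Fin n, ∀ l, l ≠ i → x i ≠ x l :=
    fun x hx i l hl => hdist x hx i l (Ne.symm hl)
  refine ⟨?_, ?_, ?_, ?_, ?_, ?_⟩
  · -- ED1
    intro i j k hij hjk hik x hxU
    have hx := hdist x hxU
    rw [pd_betaEpsX ε i j hij x hx k, aC, aC, if_neg (Ne.symm hik), if_neg (Ne.symm hjk),
      if_neg hik, if_neg hjk]
    simp only [betaEps]
    have h1 : x i - x j ≠ 0 := sub_ne_zero.2 (hx i j hij)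
    have h2 : x i - x k ≠ 0 := sub_ne_zero.2 (hx i k hik)
    have h3 : x j - x k ≠ 0 := sub_ne_zero.2 (hx j k hjk)
    have h4 : x k - x j ≠ 0 := sub_ne_zero.2 (hx k j (Ne.symm hjk))
    have hHi : Heps ε i x ≠ 0 := (HepsPos ε i x (key x hxU i)).ne'
    have hHj : Heps ε j x ≠ 0 := (HepsPos ε j x (key x hxU j)).ne'
    have hHk : Heps ε k x ≠ 0 := (HepsPos ε k x (key x hxU k)).ne'
    field_simp
    ring
  · -- ED2
    intro i j hij x hxU
    have hx := hdist x hxU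
    rw [Finset.sum_congr rfl (fun l _ => pd_betaEpsX ε i j hij x hx l), ← Finset.mul_sum]
    have h1 : x i - x j ≠ 0 := sub_ne_zero.2 (hx i j hij)
    have : ∑ l, (aC ε i x l - aC ε j x l
        - ((if i = l then (1:ℝ) else 0) - (if j = l then 1 else 0)) / (x i - x j)) = 0 := by
      rw [Finset.sum_sub_distrib, Finset.sum_sub_distrib, sum_aC, sum_aC, ← Finset.sum_div,
        Finset.sum_sub_distrib, Finset.sum_ite_eq, Finset.sum_ite_eq]
      simp
    rw [this, mul_zero]
  · -- ED3
    intro i j hij x hxU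
    have hx := hdist x hxU
    have h1 : x i - x j ≠ 0 := sub_ne_zero.2 (hx i j hij)
    have hc : ∀ l, x l * pd l (betaEps ε i j) x = betaEps ε i j x *
        (x l * aC ε i x l - x l * aC ε j x l
          - x l * ((if i = l then (1:ℝ) else 0) - (if j = l then 1 else 0)) / (x i - x j)) := by
      intro l
      rw [pd_betaEpsX ε i j hij x hx l]
      ring
    rw [Finset.sum_congr rfl (fun l _ => hc l), ← Finset.mul_sum]
    have : ∑ l, (x l * aC ε i x l - x l * aC ε j x l
        - x l * ((if i = l then (1:ℝ) else 0) - (if j = l then 1 else 0)) / (x i - x j))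
        = ((-∑ l ∈ Finset.univ.erase i, ε l) - (-∑ l ∈ Finset.univ.erase j, ε l) - 1) := by
      rw [Finset.sum_sub_distrib, Finset.sum_sub_distrib,
        sum_x_aC ε i x (key x hxU i), sum_x_aC ε j x (key x hxU j)]
      congr 1
      have : ∀ l, x l * ((if i = l then (1:ℝ) else 0) - (if j = l then 1 else 0)) / (x i - x j)
          = ((if i = l then x l else 0) - (if j = l then x l else 0)) / (x i - x j) := by
        intro l
        by_cases e1 : i = l <;> by_cases e2 : j = l <;> simp [e1, e2] <;> ring
      rw [Finset.sum_congr rfl (fun l _ => this l), ← Finset.sum_div, Finset.sum_sub_distrib,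
        Finset.sum_ite_eq, Finset.sum_ite_eq]
      simp [div_self h1]
    rw [this, mul_comm]
  · -- L1
    intro i j hij x hxU
    rw [pd_HepsX ε i x (key x hxU i) j, aC, if_neg (Ne.symm hij)]
    have h1 : x i - x j ≠ 0 := sub_ne_zero.2 (hdist x hxU i j hij)
    have hHj : Heps ε j x ≠ 0 := (HepsPos ε j x (key x hxU j)).ne'
    simp only [betaEps]
    field_simp
  · -- L2
    intro i x hxU
    rw [Finset.sum_congr rfl (fun l _ => pd_HepsX ε i x (key x hxU i) l), ← Finset.mul_sum,
      sum_aC, mul_zero]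
  · -- L3
    intro i x hxU
    have hc : ∀ l, x l * pd l (Heps ε i) x = Heps ε i x * (x l * aC ε i x l) := by
      intro l; rw [pd_HepsX ε i x (key x hxU i) l]; ring
    rw [Finset.sum_congr rfl (fun l _ => hc l), ← Finset.mul_sum,
      sum_x_aC ε i x (key x hxU i), mul_comm]
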